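/- arXiv:1905.00238 — 3 statements merged into one kernel-verified Lean document; each statement's English description precedes it below -/
import Mathlib

section
/- Let μ ∈ ℝ and σ > 0, let f(y) = (1/(σ√(2π)))·exp(−(y − μ)²/(2σ²)) be the Gaussian density with mean μ and variance σ², and for n ∈ ℕ define the truncated generalized moments μ_n = ∫_{−1}^{1} T_n(y) f(y) dy, where T_n is the n-th Chebyshev polynomial of the first kind. Then μ_0 = F(1) − F(−1) where F is the Gaussian cumulative distribution function, μ_1 = μ·μ_0 − σ²·(f(1) − f(−1)), and for every n ≥ 1 the recursion μ_{n+1} = 2μ·μ_n − 2σ²·( f(1) − f(−1)·T_n(−1) − 2n·Σ'_{j=0}^{n−1} μ_j·1_{(n−1+j) mod 2 = 0} ) − μ_{n−1} holds, where Σ' indicates that the j = 0 summand of the sum is multiplied by 1/2 (this is the paper's Proposition on truncated moments, with the sum equal to μ'_n = ∫_{−1}^{1} T_n'(y) f(y) dy divided by 2n). -/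
open Polynomial MeasureTheory

private noncomputable def chebC (n j : ℕ) : ℝ :=
  (if j = 0 then (1 : ℝ) / 2 else 1) * (if (n - 1 + j) % 2 = 0 then (2 : ℝ) else 0)

private lemma U_step (n : ℤ) :
    Chebyshev.U ℝ (n + 1) = Chebyshev.U ℝ (n - 1) + 2 * Chebyshev.T ℝ (n + 1) := by
  have h1 := Chebyshev.T_eq_U_sub_X_mul_U ℝ (n + 1)
  have h2 := Chebyshev.U_add_one ℝ n
  simp only [add_sub_cancel_right] at h1
  linear_combination (-2 : Polynomial ℝ) * h1 - h2

private lemma chebU_sum : ∀ n : ℕ, Chebyshev.U ℝ ((n : ℤ) - 1) =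
    ∑ j ∈ Finset.range n, C (chebC n j) * Chebyshev.T ℝ (j : ℤ) := by
  intro n
  induction n using Nat.strong_induction_on with
  | _ n ih =>
    match n with
    | 0 => simp [Chebyshev.U_neg_one]
    | 1 =>
      simp only [Nat.cast_one, sub_self, Chebyshev.U_zero, Finset.range_one,
        Finset.sum_singleton, Nat.cast_zero, Chebyshev.T_zero, chebC]
      norm_num
    | (m + 2) =>
      have ihm := ih m (by omega)
      have key : ((m + 2 : ℕ) : ℤ) - 1 = (m : ℤ) + 1 := by push_cast; ring
      rw [key, U_step, ihm, Finset.sum_range_succ, Finset.sum_range_succ]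
      have hcm : chebC (m + 2) m = 0 := by
        have h : (m + 2 - 1 + m) % 2 = 1 := by omega
        unfold chebC
        simp only [h]
        norm_num
      have hcm1 : chebC (m + 2) (m + 1) = 2 := by
        have h : (m + 2 - 1 + (m + 1)) % 2 = 0 := by omega
        unfold chebC
        simp only [h]
        norm_num
      have hsum : ∑ j ∈ Finset.range m, C (chebC (m + 2) j) * Chebyshev.T ℝ (j : ℤ)
          = ∑ j ∈ Finset.range m, C (chebC m j) * Chebyshev.T ℝ (j : ℤ) := by
        refine Finset.sum_congr rfl fun j hj => ?_
        have hjm : j < m := Finset.mem_range.mp hj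
        have h : (m + 2 - 1 + j) % 2 = (m - 1 + j) % 2 := by omega
        unfold chebC
        simp only [h]
      rw [hcm, hcm1, hsum]
      have hc : ((m + 1 : ℕ) : ℤ) = (m : ℤ) + 1 := by push_cast; ring
      rw [hc]
      have h2 : (C (2 : ℝ)) = (2 : Polynomial ℝ) := map_ofNat C 2
      rw [h2]
      simp only [map_zero, zero_mul, add_zero]
      try ring

private lemma T_eval_one : ∀ n : ℕ, (Chebyshev.T ℝ (n : ℤ)).eval 1 = 1 := by
  intro n
  induction n using Nat.strong_induction_on with
  | _ n ih =>
    match n with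
    | 0 => simp [Chebyshev.T_zero]
    | 1 => simp [Chebyshev.T_one]
    | (m + 2) =>
      have key : ((m + 2 : ℕ) : ℤ) = (m : ℤ) + 2 := by push_cast; ring
      have e0 : (Chebyshev.T ℝ ((m : ℕ) : ℤ)).eval 1 = 1 := ih m (by omega)
      have e1 : (Chebyshev.T ℝ ((m : ℤ) + 1)).eval 1 = 1 := by
        have h1 : ((m : ℤ) + 1) = ((m + 1 : ℕ) : ℤ) := by push_cast; ring
        rw [h1]; exact ih (m + 1) (by omega)
      rw [key, Chebyshev.T_add_two]
      norm_num [e0, e1]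

set_option maxHeartbeats 1000000 in
/-- The truncated generalized moments `μ_n = ∫_{-1}^{1} T_n(y) f(y) dy` of a Gaussian
density `f` with mean `μ` and variance `σ²` satisfy the initial values
`μ_0 = F(1) - F(-1)`, `μ_1 = μ·μ_0 - σ²·(f(1) - f(-1))` and, for `n ≥ 1`, the recursion
from the paper's proposition on truncated moments. -/
theorem truncated_chebyshev_moments_recursion
    (μ σ : ℝ) (hσ : 0 < σ)
    (f : ℝ → ℝ)
    (hf : ∀ y, f y = (1 / (σ * Real.sqrt (2 * Real.pi))) *
      Real.exp (-(y - μ) ^ 2 / (2 * σ ^ 2)))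
    (F : ℝ → ℝ) (hF : ∀ x, F x = ∫ y in Set.Iic x, f y)
    (M : ℕ → ℝ)
    (hM : ∀ n : ℕ, M n = ∫ y in (-1 : ℝ)..1, (Polynomial.Chebyshev.T ℝ (n : ℤ)).eval y * f y) :
    M 0 = F 1 - F (-1) ∧
    M 1 = μ * M 0 - σ ^ 2 * (f 1 - f (-1)) ∧
    ∀ n : ℕ, 1 ≤ n →
      M (n + 1) = 2 * μ * M n
        - 2 * σ ^ 2 * (f 1 - f (-1) * (Polynomial.Chebyshev.T ℝ (n : ℤ)).eval (-1)
          - 2 * (n : ℝ) * ∑ j ∈ Finset.range n,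
              (if j = 0 then (1 : ℝ) / 2 else 1) * M j *
                (if (n - 1 + j) % 2 = 0 then (1 : ℝ) else 0))
        - M (n - 1) := by
  have hσ0 : σ ≠ 0 := ne_of_gt hσ
  -- continuity of f
  have hfc : Continuous f := by
    have : f = fun y => (1 / (σ * Real.sqrt (2 * Real.pi))) *
        Real.exp (-(y - μ) ^ 2 / (2 * σ ^ 2)) := funext hf
    rw [this]
    exact continuous_const.mul
      (Real.continuous_exp.comp (((continuous_id.sub continuous_const).pow 2).neg.div_const _))
  -- derivative of f
  have hderiv : ∀ y : ℝ, HasDerivAt f (f y * (-(y - μ) / σ ^ 2)) y := by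
    intro y
    have h1 : HasDerivAt (fun y : ℝ => -(y - μ) ^ 2 / (2 * σ ^ 2))
        (-(y - μ) / σ ^ 2) y := by
      have h2 : HasDerivAt (fun y : ℝ => (y - μ) ^ 2) (2 * (y - μ)) y := by
        simpa using ((hasDerivAt_id y).sub_const μ).fun_pow 2
      have := (h2.neg).div_const (2 * σ ^ 2)
      exact this.congr_deriv (by field_simp)
    have h3 := (h1.exp).const_mul (1 / (σ * Real.sqrt (2 * Real.pi)))
    have hfun : f = fun y => (1 / (σ * Real.sqrt (2 * Real.pi))) *
        Real.exp (-(y - μ) ^ 2 / (2 * σ ^ 2)) := funext hf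
    rw [hf y, hfun]
    exact h3.congr_deriv (by ring)
  -- pointwise identity y * f y = μ * f y - σ² * f' y
  have hyf : ∀ y : ℝ, y * f y = μ * f y - σ ^ 2 * (f y * (-(y - μ) / σ ^ 2)) := by
    intro y
    field_simp
    ring
  -- integrability of f
  have hint : Integrable f := by
    have hb : (0 : ℝ) < 1 / (2 * σ ^ 2) := by positivity
    have h0 : Integrable (fun x : ℝ => Real.exp (-(1 / (2 * σ ^ 2)) * x ^ 2)) :=
      integrable_exp_neg_mul_sq hb
    have h1 : Integrable (fun x : ℝ => Real.exp (-(1 / (2 * σ ^ 2)) * (x - μ) ^ 2)) :=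
      h0.comp_sub_right μ
    have h2 := h1.const_mul (1 / (σ * Real.sqrt (2 * Real.pi)))
    refine h2.congr (Filter.Eventually.of_forall fun y => ?_)
    show 1 / (σ * Real.sqrt (2 * Real.pi)) *
        Real.exp (-(1 / (2 * σ ^ 2)) * (y - μ) ^ 2) = f y
    rw [hf y, show -(1 / (2 * σ ^ 2)) * (y - μ) ^ 2 = -(y - μ) ^ 2 / (2 * σ ^ 2) from by
      field_simp]
  -- integration by parts identity
  have key : ∀ P : ℝ[X], (∫ y in (-1 : ℝ)..1, y * P.eval y * f y)
      = μ * (∫ y in (-1 : ℝ)..1, P.eval y * f y)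
        - σ ^ 2 * (P.eval 1 * f 1 - P.eval (-1) * f (-1)
          - ∫ y in (-1 : ℝ)..1, P.derivative.eval y * f y) := by
    intro P
    have hPc : Continuous fun y => P.eval y := P.continuous
    have hP'c : Continuous fun y => P.derivative.eval y := P.derivative.continuous
    have hfderivc : Continuous fun y => f y * (-(y - μ) / σ ^ 2) := by
      exact hfc.mul ((continuous_id.sub continuous_const).neg.div_const _)
    have ibp := intervalIntegral.integral_mul_deriv_eq_deriv_mul
      (u := fun y => P.eval y) (v := f) (u' := fun y => P.derivative.eval y)
      (v' := fun y => f y * (-(y - μ) / σ ^ 2)) (a := (-1 : ℝ)) (b := 1)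
      (fun x _ => P.hasDerivAt x) (fun x _ => hderiv x)
      (hP'c.intervalIntegrable _ _) (hfderivc.intervalIntegrable _ _)
    have step1 : (∫ y in (-1 : ℝ)..1, y * P.eval y * f y)
        = ∫ y in (-1 : ℝ)..1, (μ * (P.eval y * f y)
            - σ ^ 2 * (P.eval y * (f y * (-(y - μ) / σ ^ 2)))) := by
      refine intervalIntegral.integral_congr fun y _ => ?_
      linear_combination P.eval y * hyf y
    have hI1 : IntervalIntegrable (fun y => μ * (P.eval y * f y)) MeasureTheory.volume (-1) 1 :=
      (continuous_const.mul (hPc.mul hfc)).intervalIntegrable _ _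
    have hI2 : IntervalIntegrable
        (fun y => σ ^ 2 * (P.eval y * (f y * (-(y - μ) / σ ^ 2)))) MeasureTheory.volume (-1) 1 :=
      (continuous_const.mul (hPc.mul hfderivc)).intervalIntegrable _ _
    rw [step1, intervalIntegral.integral_sub hI1 hI2, intervalIntegral.integral_const_mul,
      intervalIntegral.integral_const_mul, ibp]
    try ring
  -- M 0 is the integral of f
  have hM0 : M 0 = ∫ y in (-1 : ℝ)..1, f y := by
    rw [hM 0]
    simp [Chebyshev.T_zero]
  refine ⟨?_, ?_, ?_⟩
  · -- M 0 = F 1 - F (-1)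
    rw [hM0, hF, hF]
    exact (intervalIntegral.integral_Iic_sub_Iic hint.integrableOn hint.integrableOn).symm
  · -- M 1
    have h2 : (∫ y in (-1 : ℝ)..1, (Chebyshev.T ℝ ((1 : ℕ) : ℤ)).eval y * f y)
        = ∫ y in (-1 : ℝ)..1, y * (1 : ℝ[X]).eval y * f y := by
      refine intervalIntegral.integral_congr fun y _ => ?_
      norm_num [Chebyshev.T_one]
    rw [hM 1, h2, key 1]
    simp only [Polynomial.eval_one, one_mul, mul_one, Polynomial.derivative_one,
      Polynomial.eval_zero, zero_mul, intervalIntegral.integral_zero, sub_zero]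
    rw [← hM0]
  · -- recursion
    intro n hn
    obtain ⟨m, rfl⟩ : ∃ m, n = m + 1 := ⟨n - 1, by omega⟩
    set n := m + 1 with hn_def
    -- Chebyshev recurrence at the level of integrals
    have hTrec : ((Chebyshev.T ℝ ((n + 1 : ℕ) : ℤ))) =
        2 * X * Chebyshev.T ℝ ((n : ℕ) : ℤ) - Chebyshev.T ℝ ((m : ℕ) : ℤ) := by
      have : ((n + 1 : ℕ) : ℤ) = (m : ℤ) + 2 := by push_cast [hn_def]; ring
      rw [this, Chebyshev.T_add_two]
      have h1 : ((m : ℤ) + 1) = ((n : ℕ) : ℤ) := by push_cast [hn_def]; ring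
      rw [h1]
    have hintTn : ∀ k : ℕ, IntervalIntegrable
        (fun y => (Chebyshev.T ℝ (k : ℤ)).eval y * f y) volume (-1) 1 := fun k =>
      ((Chebyshev.T ℝ (k : ℤ)).continuous.mul hfc).intervalIntegrable _ _
    have hintyTn : IntervalIntegrable
        (fun y => y * (Chebyshev.T ℝ ((n : ℕ) : ℤ)).eval y * f y) volume (-1) 1 :=
      ((continuous_id.mul (Chebyshev.T ℝ ((n : ℕ) : ℤ)).continuous).mul
        hfc).intervalIntegrable _ _
    have step1 : M (n + 1) =
        2 * (∫ y in (-1 : ℝ)..1, y * (Chebyshev.T ℝ ((n : ℕ) : ℤ)).eval y * f y) - M m := by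
      rw [hM (n + 1), hM m]
      have : (∫ y in (-1 : ℝ)..1, (Chebyshev.T ℝ ((n + 1 : ℕ) : ℤ)).eval y * f y)
          = ∫ y in (-1 : ℝ)..1,
            (2 * (y * (Chebyshev.T ℝ ((n : ℕ) : ℤ)).eval y * f y)
              - (Chebyshev.T ℝ ((m : ℕ) : ℤ)).eval y * f y) := by
        refine intervalIntegral.integral_congr fun y _ => ?_
        rw [hTrec]
        simp
        ring
      rw [this, intervalIntegral.integral_sub (hintyTn.const_mul 2) (hintTn m),
        intervalIntegral.integral_const_mul]
    -- apply IBP with P = T n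
    have hk := key (Chebyshev.T ℝ ((n : ℕ) : ℤ))
    -- derivative of T n as a sum
    have hder : (Chebyshev.T ℝ ((n : ℕ) : ℤ)).derivative
        = ((n : ℕ) : ℤ) * Chebyshev.U ℝ (((n : ℕ) : ℤ) - 1) :=
      Chebyshev.T_derivative_eq_U _
    have hsum' : (∫ y in (-1 : ℝ)..1,
        (Chebyshev.T ℝ ((n : ℕ) : ℤ)).derivative.eval y * f y)
        = (n : ℝ) * ∑ j ∈ Finset.range n, chebC n j * M j := by
      rw [hder, chebU_sum n]
      have heval : ∀ y : ℝ, ((((n : ℕ) : ℤ) : ℝ[X]) *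
          ∑ j ∈ Finset.range n, C (chebC n j) * Chebyshev.T ℝ (j : ℤ)).eval y
          = (n : ℝ) * ∑ j ∈ Finset.range n, chebC n j * (Chebyshev.T ℝ (j : ℤ)).eval y := by
        intro y
        simp [eval_finset_sum]
      have : (∫ y in (-1 : ℝ)..1, ((((n : ℕ) : ℤ) : ℝ[X]) *
            ∑ j ∈ Finset.range n, C (chebC n j) * Chebyshev.T ℝ (j : ℤ)).eval y * f y)
          = ∫ y in (-1 : ℝ)..1, ∑ j ∈ Finset.range n,
              (n : ℝ) * chebC n j * ((Chebyshev.T ℝ (j : ℤ)).eval y * f y) := by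
        refine intervalIntegral.integral_congr fun y _ => ?_
        rw [heval, Finset.mul_sum, Finset.sum_mul]
        refine Finset.sum_congr rfl fun j _ => ?_
        ring
      rw [this, intervalIntegral.integral_finset_sum
        (fun j _ => (hintTn j).const_mul _)]
      rw [Finset.mul_sum]
      refine Finset.sum_congr rfl fun j _ => ?_
      rw [intervalIntegral.integral_const_mul, ← hM j]
      ring
    rw [step1, hk, T_eval_one n, ← hM n, hsum']
    have hfinal : ∑ j ∈ Finset.range n, chebC n j * M j
        = 2 * ∑ j ∈ Finset.range n,
            (if j = 0 then (1 : ℝ) / 2 else 1) * M j *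
              (if (n - 1 + j) % 2 = 0 then (1 : ℝ) else 0) := by
      rw [Finset.mul_sum]
      refine Finset.sum_congr rfl fun j _ => ?_
      unfold chebC
      by_cases h1 : j = 0 <;> by_cases h2 : (n - 1 + j) % 2 = 0 <;> simp [h1, h2] <;> ring
    have hmn : M (n - 1) = M m := by norm_num [hn_def]
    rw [hmn, hfinal]
    ring
end

section
/- Let μ ∈ ℝ and σ > 0, let f be the Gaussian density with mean μ and variance σ², and define μ_n = ∫_{−1}^{1} T_n(y) f(y) dy and μ'_n = ∫_{−1}^{1} T_n'(y) f(y) dy, where T_n is the n-th Chebyshev polynomial of the first kind and T_n' its derivative. Then for every n ∈ ℕ, ∫_{−1}^{1} y·T_n(y)·f(y) dy = μ·μ_n − σ²·( T_n(1)·f(1) − T_n(−1)·f(−1) − μ'_n ). -/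
open Polynomial MeasureTheory

/-- Integration-by-parts identity for the truncated generalized moments:
`∫_{-1}^{1} y·T_n(y)·f(y) dy = μ·μ_n - σ²·(T_n(1)·f(1) - T_n(-1)·f(-1) - μ'_n)`. -/
theorem truncated_chebyshev_moment_mul_id
    (μ σ : ℝ) (hσ : 0 < σ)
    (f : ℝ → ℝ)
    (hf : ∀ y, f y = (1 / (σ * Real.sqrt (2 * Real.pi))) *
      Real.exp (-(y - μ) ^ 2 / (2 * σ ^ 2)))
    (M M' : ℕ → ℝ)
    (hM : ∀ n : ℕ, M n = ∫ y in (-1 : ℝ)..1, (Polynomial.Chebyshev.T ℝ (n : ℤ)).eval y * f y)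
    (hM' : ∀ n : ℕ, M' n =
      ∫ y in (-1 : ℝ)..1, (Polynomial.derivative (Polynomial.Chebyshev.T ℝ (n : ℤ))).eval y * f y)
    (n : ℕ) :
    (∫ y in (-1 : ℝ)..1, y * (Polynomial.Chebyshev.T ℝ (n : ℤ)).eval y * f y) =
      μ * M n - σ ^ 2 * ((Polynomial.Chebyshev.T ℝ (n : ℤ)).eval 1 * f 1
        - (Polynomial.Chebyshev.T ℝ (n : ℤ)).eval (-1) * f (-1) - M' n) := by
  have hσ2 : (σ : ℝ) ^ 2 ≠ 0 := pow_ne_zero _ hσ.ne'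
  set P := Polynomial.Chebyshev.T ℝ (n : ℤ) with hP
  have hfe : f = fun x => (1 / (σ * Real.sqrt (2 * Real.pi))) *
      Real.exp (-(x - μ) ^ 2 / (2 * σ ^ 2)) := funext hf
  have hfc : Continuous f := by
    rw [hfe]
    continuity
  have hfd : ∀ y : ℝ, HasDerivAt f (-((y - μ) / σ ^ 2) * f y) y := by
    intro y
    have h1 : HasDerivAt (fun x : ℝ => -(x - μ) ^ 2 / (2 * σ ^ 2))
        (-((y - μ) / σ ^ 2)) y := by
      have h0 : HasDerivAt (fun x : ℝ => -(x - μ) ^ 2 / (2 * σ ^ 2))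
          (-(↑2 * (y - μ) ^ (2 - 1) * 1) / (2 * σ ^ 2)) y :=
        ((((hasDerivAt_id y).sub_const μ).pow 2).neg).div_const _
      convert h0 using 1
      field_simp
      ring
    have h2 := (h1.exp).const_mul (1 / (σ * Real.sqrt (2 * Real.pi)))
    rw [hfe]
    refine h2.congr_deriv ?_
    ring
  have hPd : ∀ y : ℝ, HasDerivAt (fun x => P.eval x * f x)
      (P.derivative.eval y * f y + P.eval y * (-((y - μ) / σ ^ 2) * f y)) y :=
    fun y => (P.hasDerivAt y).mul (hfd y)
  have hc1 : Continuous fun y : ℝ => P.derivative.eval y * f y :=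
    (P.derivative.continuous).mul hfc
  have hc2 : Continuous fun y : ℝ => P.eval y * (-((y - μ) / σ ^ 2) * f y) :=
    (P.continuous).mul ((((continuous_id.sub continuous_const).div_const (σ ^ 2)).neg).mul hfc)
  have hftc :
      (∫ y in (-1 : ℝ)..1, (P.derivative.eval y * f y + P.eval y * (-((y - μ) / σ ^ 2) * f y)))
        = P.eval 1 * f 1 - P.eval (-1) * f (-1) := by
    exact intervalIntegral.integral_eq_sub_of_hasDerivAt (fun y _ => hPd y)
      ((hc1.add hc2).intervalIntegrable _ _)
  rw [intervalIntegral.integral_add (hc1.intervalIntegrable _ _) (hc2.intervalIntegrable _ _)]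
    at hftc
  have hkey : (fun y : ℝ => y * P.eval y * f y)
      = fun y => μ * (P.eval y * f y) - σ ^ 2 * (P.eval y * (-((y - μ) / σ ^ 2) * f y)) := by
    funext y
    field_simp
    ring
  rw [hkey,
    intervalIntegral.integral_sub (f := fun y => μ * (P.eval y * f y))
      (g := fun y => σ ^ 2 * (P.eval y * (-((y - μ) / σ ^ 2) * f y)))
      ((continuous_const.mul ((P.continuous).mul hfc)).intervalIntegrable _ _)
      ((continuous_const.mul hc2).intervalIntegrable _ _),
    intervalIntegral.integral_const_mul, intervalIntegral.integral_const_mul,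
    hM, hM']
  rw [← hP]
  have h3 : (∫ y in (-1 : ℝ)..1, P.eval y * (-((y - μ) / σ ^ 2) * f y))
      = P.eval 1 * f 1 - P.eval (-1) * f (-1)
        - ∫ y in (-1 : ℝ)..1, P.derivative.eval y * f y := by
    linarith [hftc]
  rw [h3]
end

section
/- (Interpolation property of the Chebyshev coefficient formula.) Let N ≥ 1 be a natural number, let z_k = cos(πk/N) for k = 0, …, N be the Chebyshev points, and let f : [−1,1] → ℝ. Define the coefficients c_j = (2^{1_{0<j<N}}/N)·Σ''_{k=0}^{N} f(z_k)·T_j(z_k) for j = 0, …, N, where Σ'' indicates that the k = 0 and k = N summands are multiplied by 1/2, and where the factor 2^{1_{0<j<N}} equals 2 if 0 < j < N and 1 if j = 0 or j = N. Then the polynomial I_N(f)(z) = Σ_{j=0}^{N} c_j·T_j(z) interpolates f at the Chebyshev points, i.e., Σ_{j=0}^{N} c_j·T_j(z_m) = f(z_m) for every m = 0, …, N. -/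
open Polynomial Real


lemma cheb_tele (n : ℕ) (θ : ℝ) :
    (∑ j ∈ Finset.range n, Real.cos (j * θ) * (2 * Real.sin (θ / 2))) =
      Real.sin (((n : ℝ) - 1 / 2) * θ) + Real.sin (θ / 2) := by
  have h := Finset.sum_range_sub (fun j => Real.sin (((j : ℝ) - 1 / 2) * θ)) n
  have e : ∀ j : ℕ, Real.cos (j * θ) * (2 * Real.sin (θ / 2)) =
      (fun j : ℕ => Real.sin (((j : ℝ) - 1 / 2) * θ)) (j + 1) -
      (fun j : ℕ => Real.sin (((j : ℝ) - 1 / 2) * θ)) j := by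
    intro j
    simp only
    push_cast
    have h1 : ((j : ℝ) + 1 - 1 / 2) * θ = (j : ℝ) * θ + θ / 2 := by ring
    have h2 : ((j : ℝ) - 1 / 2) * θ = (j : ℝ) * θ - θ / 2 := by ring
    rw [h1, h2, Real.sin_add, Real.sin_sub]
    ring
  calc (∑ j ∈ Finset.range n, Real.cos (j * θ) * (2 * Real.sin (θ / 2)))
      = ∑ j ∈ Finset.range n,
        ((fun j : ℕ => Real.sin (((j : ℝ) - 1 / 2) * θ)) (j + 1) -
         (fun j : ℕ => Real.sin (((j : ℝ) - 1 / 2) * θ)) j) :=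
        Finset.sum_congr rfl fun j _ => e j
    _ = Real.sin (((n : ℝ) - 1 / 2) * θ) - Real.sin (((0 : ℝ) - 1 / 2) * θ) := by
        rw [h]; push_cast; ring_nf
    _ = Real.sin (((n : ℝ) - 1 / 2) * θ) + Real.sin (θ / 2) := by
        have : ((0 : ℝ) - 1 / 2) * θ = -(θ / 2) := by ring
        rw [this, Real.sin_neg]; ring

lemma eps_split (N : ℕ) (hN : 1 ≤ N) (g : ℕ → ℝ) :
    (∑ j ∈ Finset.range (N + 1), (if 0 < j ∧ j < N then (2 : ℝ) else 1) * g j) =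
      2 * (∑ j ∈ Finset.range (N + 1), g j) - g 0 - g N := by
  have e : ∀ j ∈ Finset.range (N + 1),
      (if 0 < j ∧ j < N then (2 : ℝ) else 1) * g j =
        2 * g j - (if j = 0 then g j else 0) - (if j = N then g j else 0) := by
    intro j hj
    simp only [Finset.mem_range] at hj
    rcases eq_or_ne j 0 with h0 | h0
    · subst h0
      rw [if_neg (by simp), if_pos rfl, if_neg (by omega)]; ring
    rcases eq_or_ne j N with hn | hn
    · subst hn
      rw [if_neg (by simp), if_neg h0, if_pos rfl]; ring
    · rw [if_pos ⟨by omega, by omega⟩, if_neg h0, if_neg hn]; ring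
  rw [Finset.sum_congr rfl e]
  rw [Finset.sum_sub_distrib, Finset.sum_sub_distrib, ← Finset.mul_sum]
  rw [Finset.sum_ite_eq' (Finset.range (N + 1)) 0 g,
      Finset.sum_ite_eq' (Finset.range (N + 1)) N g]
  rw [if_pos (by simp), if_pos (by simp [Nat.lt_succ_iff])]

lemma D_eq (N : ℕ) (hN : 1 ≤ N) (p : ℤ) :
    (∑ j ∈ Finset.range (N + 1),
        (if 0 < j ∧ j < N then (2 : ℝ) else 1) * Real.cos (j * ((p : ℝ) * π / N))) =
      if (2 * (N : ℤ)) ∣ p then 2 * N else 0 := by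
  have hNR : (N : ℝ) ≠ 0 := Nat.cast_ne_zero.mpr (by omega)
  set θ : ℝ := (p : ℝ) * π / N with hθ
  rw [eps_split N hN]
  by_cases hdvd : (2 * (N : ℤ)) ∣ p
  · obtain ⟨q, hq⟩ := hdvd
    have hcos : ∀ j : ℕ, Real.cos (j * θ) = 1 := by
      intro j
      have : (j : ℝ) * θ = ((j : ℤ) * q : ℤ) * (2 * π) := by
        rw [hθ, hq]; push_cast; field_simp
      rw [this, Real.cos_int_mul_two_pi]
    simp only [hcos]
    rw [Finset.sum_const, Finset.card_range, if_pos ⟨q, hq⟩]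
    push_cast; ring
  · rw [if_neg hdvd]
    have hsinN : Real.sin ((N : ℝ) * θ) = 0 := by
      have : (N : ℝ) * θ = (p : ℤ) * π := by rw [hθ]; field_simp
      rw [this, Real.sin_int_mul_pi]
    have hsin2 : Real.sin (θ / 2) ≠ 0 := by
      intro h
      obtain ⟨n, hn⟩ := Real.sin_eq_zero_iff.mp h
      apply hdvd
      refine ⟨n, ?_⟩
      have hπ : π ≠ 0 := Real.pi_ne_zero
      have : (p : ℝ) = (2 * (N : ℤ) * n : ℤ) := by
        rw [hθ] at hn
        field_simp at hn
        push_cast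
        have h2 : ((n : ℝ) * (N * 2)) * π = (p : ℝ) * π := by rw [← hn]; ring
        have := mul_right_cancel₀ hπ h2
        linarith [this]
      exact_mod_cast this
    have hsum : (∑ j ∈ Finset.range (N + 1), Real.cos (j * θ)) * (2 * Real.sin (θ / 2)) =
        Real.sin (((N : ℝ) + 1 / 2) * θ) + Real.sin (θ / 2) := by
      have ht := cheb_tele (N + 1) θ
      rw [← Finset.sum_mul] at ht
      rw [ht]; push_cast; ring_nf
    have hexp : Real.sin (((N : ℝ) + 1 / 2) * θ) =
        Real.sin ((N : ℝ) * θ) * Real.cos (θ / 2) + Real.cos ((N : ℝ) * θ) * Real.sin (θ / 2) := by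
      rw [show ((N : ℝ) + 1 / 2) * θ = (N : ℝ) * θ + θ / 2 by ring, Real.sin_add]
    have key : (2 * (∑ j ∈ Finset.range (N + 1), Real.cos (j * θ)) - Real.cos ((0 : ℕ) * θ)
        - Real.cos ((N : ℝ) * θ)) * (2 * Real.sin (θ / 2)) = 0 := by
      have e0 : Real.cos ((0 : ℕ) * θ) = 1 := by norm_num
      have expand : (2 * (∑ j ∈ Finset.range (N + 1), Real.cos (j * θ)) - Real.cos ((0 : ℕ) * θ)
          - Real.cos ((N : ℝ) * θ)) * (2 * Real.sin (θ / 2)) =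
          2 * ((∑ j ∈ Finset.range (N + 1), Real.cos (j * θ)) * (2 * Real.sin (θ / 2)))
          - Real.cos ((0 : ℕ) * θ) * (2 * Real.sin (θ / 2))
          - Real.cos ((N : ℝ) * θ) * (2 * Real.sin (θ / 2)) := by ring
      rw [expand, hsum, hexp, hsinN, e0]
      ring
    have h2 : (2 : ℝ) * Real.sin (θ / 2) ≠ 0 := by simp [hsin2]
    rcases mul_eq_zero.mp key with h | h
    · exact_mod_cast h
    · exact absurd h h2

lemma cheb_dvd_add_iff (N k m : ℕ) (hN : 1 ≤ N) (hk : k ≤ N) (hm : m ≤ N) :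
    ((2 * (N : ℤ)) ∣ ((k : ℤ) + m)) ↔ ((k = 0 ∧ m = 0) ∨ (k = N ∧ m = N)) := by
  constructor
  · rintro ⟨q, hq⟩
    have hN' : (1 : ℤ) ≤ N := by exact_mod_cast hN
    have hk' : (k : ℤ) ≤ N := by exact_mod_cast hk
    have hm' : (m : ℤ) ≤ N := by exact_mod_cast hm
    have hk0 : (0 : ℤ) ≤ k := Int.natCast_nonneg k
    have hm0 : (0 : ℤ) ≤ m := Int.natCast_nonneg m
    have hq0 : 0 ≤ q := by nlinarith
    have hq1 : q ≤ 1 := by nlinarith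
    interval_cases q <;> omega
  · rintro (⟨h1, h2⟩ | ⟨h1, h2⟩)
    · subst h1; subst h2; simp
    · subst h1; subst h2; exact ⟨1, by push_cast; ring⟩

lemma cheb_dvd_sub_iff (N k m : ℕ) (hN : 1 ≤ N) (hk : k ≤ N) (hm : m ≤ N) :
    ((2 * (N : ℤ)) ∣ ((k : ℤ) - m)) ↔ k = m := by
  constructor
  · rintro ⟨q, hq⟩
    have hN' : (1 : ℤ) ≤ N := by exact_mod_cast hN
    have hk' : (k : ℤ) ≤ N := by exact_mod_cast hk
    have hm' : (m : ℤ) ≤ N := by exact_mod_cast hm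
    have hk0 : (0 : ℤ) ≤ k := Int.natCast_nonneg k
    have hm0 : (0 : ℤ) ≤ m := Int.natCast_nonneg m
    have hq0 : 0 ≤ q := by nlinarith
    have hq1 : q ≤ 0 := by nlinarith
    interval_cases q <;> omega
  · rintro rfl; simp

lemma my_inner_sum (N : ℕ) (hN : 1 ≤ N) (k m : ℕ) (hk : k ≤ N) (hm : m ≤ N) :
    (∑ j ∈ Finset.range (N + 1), (if 0 < j ∧ j < N then (2 : ℝ) else 1) *
        (Real.cos (j * (π * k / N)) * Real.cos (j * (π * m / N)))) =
      if k = m then (if m = 0 ∨ m = N then (2 * N : ℝ) else N) else 0 := by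
  have hNR : (N : ℝ) ≠ 0 := Nat.cast_ne_zero.mpr (by omega)
  have h1 := D_eq N hN ((k : ℤ) + m)
  have h2 := D_eq N hN ((k : ℤ) - m)
  have key : (∑ j ∈ Finset.range (N + 1), (if 0 < j ∧ j < N then (2 : ℝ) else 1) *
        (Real.cos (j * (π * k / N)) * Real.cos (j * (π * m / N)))) * 2 =
      (∑ j ∈ Finset.range (N + 1), (if 0 < j ∧ j < N then (2 : ℝ) else 1) *
        Real.cos (j * ((((k : ℤ) + m : ℤ) : ℝ) * π / N))) +
      (∑ j ∈ Finset.range (N + 1), (if 0 < j ∧ j < N then (2 : ℝ) else 1) *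
        Real.cos (j * ((((k : ℤ) - m : ℤ) : ℝ) * π / N))) := by
    rw [Finset.sum_mul, ← Finset.sum_add_distrib]
    refine Finset.sum_congr rfl fun j _ => ?_
    have c1 : (j : ℝ) * ((((k : ℤ) + m : ℤ) : ℝ) * π / N) =
        j * (π * k / N) + j * (π * m / N) := by push_cast; field_simp
    have c2 : (j : ℝ) * ((((k : ℤ) - m : ℤ) : ℝ) * π / N) =
        j * (π * k / N) - j * (π * m / N) := by push_cast; field_simp
    rw [c1, c2, Real.cos_add, Real.cos_sub]
    ring
  rw [h1, h2] at key
  simp only [cheb_dvd_add_iff N k m hN hk hm, cheb_dvd_sub_iff N k m hN hk hm, Nat.cast_ite] at key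
  have hNR' : (0:ℝ) < N := by positivity
  split_ifs at key ⊢ <;> push_cast at key ⊢ <;> first | linarith | omega


/-- Interpolation property of the Chebyshev coefficient formula: the polynomial
`I_N(f)(z) = Σ_{j=0}^{N} c_j·T_j(z)` with coefficients
`c_j = (2^{1_{0<j<N}}/N)·Σ''_{k=0}^{N} f(z_k)·T_j(z_k)` (the `k = 0` and `k = N`
summands halved) interpolates `f` at the Chebyshev points `z_k = cos(πk/N)`. -/
theorem chebyshev_coefficients_interpolate
    (N : ℕ) (hN : 1 ≤ N) (f : ℝ → ℝ)
    (z : ℕ → ℝ) (hz : ∀ k : ℕ, z k = Real.cos (Real.pi * k / N))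
    (c : ℕ → ℝ)
    (hc : ∀ j : ℕ, c j = ((if 0 < j ∧ j < N then (2 : ℝ) else 1) / N) *
      ∑ k ∈ Finset.range (N + 1),
        (if k = 0 ∨ k = N then (1 : ℝ) / 2 else 1) * f (z k) *
          (Polynomial.Chebyshev.T ℝ (j : ℤ)).eval (z k)) :
    ∀ m : ℕ, m ≤ N →
      (∑ j ∈ Finset.range (N + 1), c j * (Polynomial.Chebyshev.T ℝ (j : ℤ)).eval (z m)) =
        f (z m) := by
  intro m hm
  have hNR : (N : ℝ) ≠ 0 := Nat.cast_ne_zero.mpr (by omega)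
  simp only [hc, hz, Polynomial.Chebyshev.T_real_cos, Int.cast_natCast]
  calc
    (∑ j ∈ Finset.range (N + 1), ((if 0 < j ∧ j < N then (2 : ℝ) else 1) / N *
        ∑ k ∈ Finset.range (N + 1), (if k = 0 ∨ k = N then (1 : ℝ) / 2 else 1) *
          f (Real.cos (π * k / N)) * Real.cos (j * (π * k / N))) * Real.cos (j * (π * m / N)))
      = ∑ j ∈ Finset.range (N + 1), ∑ k ∈ Finset.range (N + 1),
          ((if 0 < j ∧ j < N then (2 : ℝ) else 1) / N *
            ((if k = 0 ∨ k = N then (1 : ℝ) / 2 else 1) *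
              f (Real.cos (π * k / N)) * Real.cos (j * (π * k / N))) *
            Real.cos (j * (π * m / N))) := by
        refine Finset.sum_congr rfl fun j _ => ?_
        rw [Finset.mul_sum, Finset.sum_mul]
    _ = ∑ k ∈ Finset.range (N + 1), ∑ j ∈ Finset.range (N + 1),
          ((if 0 < j ∧ j < N then (2 : ℝ) else 1) / N *
            ((if k = 0 ∨ k = N then (1 : ℝ) / 2 else 1) *
              f (Real.cos (π * k / N)) * Real.cos (j * (π * k / N))) *
            Real.cos (j * (π * m / N))) := Finset.sum_comm
    _ = ∑ k ∈ Finset.range (N + 1),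
          ((if k = 0 ∨ k = N then (1 : ℝ) / 2 else 1) * f (Real.cos (π * k / N)) / N) *
          ∑ j ∈ Finset.range (N + 1), (if 0 < j ∧ j < N then (2 : ℝ) else 1) *
            (Real.cos (j * (π * k / N)) * Real.cos (j * (π * m / N))) := by
        refine Finset.sum_congr rfl fun k _ => ?_
        rw [Finset.mul_sum]
        exact Finset.sum_congr rfl fun j _ => by ring
    _ = ∑ k ∈ Finset.range (N + 1),
          ((if k = 0 ∨ k = N then (1 : ℝ) / 2 else 1) * f (Real.cos (π * k / N)) / N) *
          (if k = m then (if m = 0 ∨ m = N then (2 * N : ℝ) else N) else 0) := by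
        refine Finset.sum_congr rfl fun k hk => ?_
        rw [my_inner_sum N hN k m (by simpa [Nat.lt_succ_iff] using hk) hm]
    _ = f (Real.cos (π * m / N)) := by
        rw [Finset.sum_eq_single_of_mem m (by simp [Nat.lt_succ_iff, hm])]
        · rw [if_pos rfl]
          by_cases h0 : m = 0 ∨ m = N
          · rw [if_pos h0, if_pos h0]
            field_simp
          · rw [if_neg h0, if_neg h0]
            field_simp
        · intro k _ hkm
          rw [if_neg hkm, mul_zero]
end
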